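/- Let K ≥ 0 be an integer and q_0, …, q_K positive reals with q_K ≤ q_{K−1} ≤ … ≤ q_0. For p ∈ [0,1] define S(p) = Σ_{i=0}^{K−1} p(1−p)^i/q_i + (1−p)^K/q_K. Then S(p) = 1/q_0 + Σ_{i=1}^{K} (1/q_i − 1/q_{i−1})·(1−p)^i for every p ∈ [0,1], and S is nonincreasing on [0,1]. -/

import Mathlib

open Finset

lemma csma_S_eq
    (K : ℕ) (q : ℕ → ℝ)
    (hqpos : ∀ i ≤ K, 0 < q i) (p : ℝ) :
    (∑ i ∈ Finset.range K, p * (1 - p) ^ i / q i + (1 - p) ^ K / q K)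
      = 1 / q 0 + ∑ i ∈ Finset.Icc 1 K, (1 / q i - 1 / q (i - 1)) * (1 - p) ^ i := by
  induction K with
  | zero => simp
  | succ K ih =>
    have hK : ∀ i ≤ K, 0 < q i := fun i hi => hqpos i (hi.trans (Nat.le_succ K))
    have hIH := ih hK
    have hqK : q K ≠ 0 := (hK K le_rfl).ne'
    have hqK1 : q (K + 1) ≠ 0 := (hqpos (K + 1) le_rfl).ne'
    rw [Finset.sum_range_succ, Finset.sum_Icc_succ_top (Nat.one_le_iff_ne_zero.mpr (Nat.succ_ne_zero K))]
    have : ∑ i ∈ Finset.range K, p * (1 - p) ^ i / q i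
        = 1 / q 0 + ∑ i ∈ Finset.Icc 1 K, (1 / q i - 1 / q (i - 1)) * (1 - p) ^ i
          - (1 - p) ^ K / q K := by linarith [hIH]
    rw [this]
    simp only [Nat.add_sub_cancel]
    field_simp
    ring

/-- With nonincreasing positive backoff probabilities `q_0 ≥ … ≥ q_K`, the function
`S(p) = Σ_{i<K} p(1−p)^i/q_i + (1−p)^K/q_K` satisfies
`S(p) = 1/q_0 + Σ_{i=1}^{K} (1/q_i − 1/q_{i−1})(1−p)^i` and is nonincreasing on `[0,1]`. -/
theorem csma_S_antitone
    (K : ℕ) (q : ℕ → ℝ)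
    (hqpos : ∀ i ≤ K, 0 < q i)
    (hqmono : ∀ i, 1 ≤ i → i ≤ K → q i ≤ q (i - 1)) :
    (∀ p ∈ Set.Icc (0 : ℝ) 1,
      (∑ i ∈ Finset.range K, p * (1 - p) ^ i / q i + (1 - p) ^ K / q K)
        = 1 / q 0 + ∑ i ∈ Finset.Icc 1 K, (1 / q i - 1 / q (i - 1)) * (1 - p) ^ i) ∧
    AntitoneOn (fun p : ℝ =>
      ∑ i ∈ Finset.range K, p * (1 - p) ^ i / q i + (1 - p) ^ K / q K)
      (Set.Icc (0 : ℝ) 1) := by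
  constructor
  · intro p _
    exact csma_S_eq K q hqpos p
  · intro a ha b hb hab
    simp only
    rw [csma_S_eq K q hqpos a, csma_S_eq K q hqpos b]
    refine add_le_add le_rfl ?_
    apply Finset.sum_le_sum
    intro i hi
    rw [Finset.mem_Icc] at hi
    have hi1 := hi.1
    have hiK := hi.2
    have hcoef : 0 ≤ 1 / q i - 1 / q (i - 1) := by
      have h1 : 0 < q i := hqpos i hiK
      have h2 : 0 < q (i - 1) := hqpos (i - 1) (le_trans (Nat.sub_le i 1) hiK)
      have := hqmono i hi1 hiK
      have : 1 / q (i - 1) ≤ 1 / q i := one_div_le_one_div_of_le h1 this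
      linarith
    apply mul_le_mul_of_nonneg_left _ hcoef
    apply pow_le_pow_left₀ (by linarith [hb.2]) (by linarith)
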